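/- The flattening of an object-centric process execution can admit alignments inconsistent with any object-centric alignment: there exists an accepting object-centric Petri net AN and a process execution P_X such that each per-object flattened trace has a perfect-fitness-optimal traditional alignment in AN's type-projected subnet, but the union of the model parts of these per-object alignments does not correspond to any single binding sequence in the language of AN. -/

import Mathlib

open scoped Classical

/-- A (simplified) object-centric Petri net: typed places, transitions with presets,
postsets (all arcs non-variable with multiplicity one) and activity labels. -/
structure OCNet (Pl Tr Ty Act : Type) where
  pt : Pl → Ty
  pre : Tr → Finset Pl
  post : Tr → Finset Pl
  lab : Tr → Act

namespace OCNet

variable {Pl Tr Ty Act Obj : Type}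

/-- Tokens consumed by firing transition `t` under binding `b` (one object per type). -/
noncomputable def consumed (N : OCNet Pl Tr Ty Act) (t : Tr) (b : Ty → Obj) :
    Multiset (Pl × Obj) :=
  (N.pre t).val.map fun p => (p, b (N.pt p))

/-- Tokens produced by firing transition `t` under binding `b`. -/
noncomputable def produced (N : OCNet Pl Tr Ty Act) (t : Tr) (b : Ty → Obj) :
    Multiset (Pl × Obj) :=
  (N.post t).val.map fun p => (p, b (N.pt p))

/-- A binding is well typed if every place involved receives an object of its type. -/
def WellTyped (N : OCNet Pl Tr Ty Act) (otype : Obj → Ty) (t : Tr) (b : Ty → Obj) : Prop :=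
  ∀ p : Pl, (p ∈ N.pre t ∨ p ∈ N.post t) → otype (b (N.pt p)) = N.pt p

/-- `Run N otype M σ M'` : the binding sequence `σ` fires from marking `M` to `M'`. -/
inductive Run (N : OCNet Pl Tr Ty Act) (otype : Obj → Ty) :
    Multiset (Pl × Obj) → List (Tr × (Ty → Obj)) → Multiset (Pl × Obj) → Prop
  | nil (M : Multiset (Pl × Obj)) : Run N otype M [] M
  | step {M M'' : Multiset (Pl × Obj)} {t : Tr} {b : Ty → Obj} {σ : List (Tr × (Ty → Obj))}
      (hwt : WellTyped N otype t b)
      (hen : consumed N t b ≤ M)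
      (h : Run N otype (M - consumed N t b + produced N t b) σ M'') :
      Run N otype M ((t, b) :: σ) M''

/-- The objects involved in firing `t` under binding `b`. -/
noncomputable def objsOf (N : OCNet Pl Tr Ty Act) (t : Tr) (b : Ty → Obj) : Set Obj :=
  {o : Obj | ∃ p : Pl, (p ∈ N.pre t ∨ p ∈ N.post t) ∧ b (N.pt p) = o}

/-- Flattening a binding sequence to the trace of activities of object `o`. -/
noncomputable def flatten (N : OCNet Pl Tr Ty Act) (σ : List (Tr × (Ty → Obj))) (o : Obj) :
    List Act :=
  σ.filterMap fun s => if o ∈ objsOf N s.1 s.2 then some (N.lab s.1) else none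

/-- Preset of `t` in the type-projected (flattened) subnet for type `ty`. -/
noncomputable def preTy (N : OCNet Pl Tr Ty Act) (ty : Ty) (t : Tr) : Multiset Pl :=
  (N.pre t).val.filter fun p => N.pt p = ty

/-- Postset of `t` in the type-projected (flattened) subnet for type `ty`. -/
noncomputable def postTy (N : OCNet Pl Tr Ty Act) (ty : Ty) (t : Tr) : Multiset Pl :=
  (N.post t).val.filter fun p => N.pt p = ty

/-- Runs of the type-projected subnet for type `ty`: only transitions touching
type-`ty` places fire, consuming and producing their type-`ty` pre/post places. -/
inductive FlatRun (N : OCNet Pl Tr Ty Act) (ty : Ty) :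
    Multiset Pl → List Tr → Multiset Pl → Prop
  | nil (m : Multiset Pl) : FlatRun N ty m [] m
  | step {m m'' : Multiset Pl} {t : Tr} {τ : List Tr}
      (htouch : preTy N ty t ≠ 0 ∨ postTy N ty t ≠ 0)
      (hen : preTy N ty t ≤ m)
      (h : FlatRun N ty (m - preTy N ty t + postTy N ty t) τ m'') :
      FlatRun N ty m ((t) :: τ) m''

/-- Restriction of an object-centric marking to the places of type `ty`. -/
noncomputable def restrictTy (N : OCNet Pl Tr Ty Act) (ty : Ty) (M : Multiset (Pl × Obj)) :
    Multiset Pl :=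
  (M.filter fun x => N.pt x.1 = ty).map Prod.fst

end OCNet

/-- The counterexample net: two places (`false` of type `false`, `true` of type
`true`), two transitions each consuming both places, labeled by themselves. -/
noncomputable def exN : OCNet Bool Bool Bool Bool :=
  ⟨id, fun _ => Finset.univ, fun _ => ∅, id⟩

lemma exN_objs (t : Bool) (b : Bool → Bool) (hwt : OCNet.WellTyped exN id t b) (o : Bool) :
    o ∈ OCNet.objsOf exN t b := by
  have hb : b o = o := hwt o (Or.inl (Finset.mem_univ o))
  exact ⟨o, Or.inl (Finset.mem_univ o), hb⟩

lemma exN_flatten_eq {M M' : Multiset (Bool × Bool)} {σ : List (Bool × (Bool → Bool))}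
    (h : OCNet.Run exN id M σ M') :
    OCNet.flatten exN σ false = OCNet.flatten exN σ true := by
  induction h with
  | nil => rfl
  | step hwt hen h ih =>
      simp only [OCNet.flatten, List.filterMap_cons] at ih ⊢
      rw [if_pos (exN_objs _ _ hwt false), if_pos (exN_objs _ _ hwt true)]
      simpa [OCNet.flatten] using ih

/-- Flattening an object-centric process execution can admit alignments
inconsistent with any object-centric alignment: there exist an accepting
object-centric Petri net and per-object traces such that each flattened per-object
trace perfectly fits the type-projected subnet of its type (i.e. it is the visible
label sequence of a complete run of the flattened subnet, so a traditional alignment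
of perfect fitness exists), yet no single binding sequence in the language of the
net (a run from the initial to the final marking) has exactly these per-object
traces as its flattening. -/
theorem flattening_admits_inconsistent_alignments :
    ∃ (Pl Tr Ty Act Obj : Type) (N : OCNet Pl Tr Ty Act) (otype : Obj → Ty)
      (Minit Mfinal : Multiset (Pl × Obj)) (traces : Obj → List Act),
      (∀ o : Obj, ∃ τ : List Tr,
          OCNet.FlatRun N (otype o)
            (OCNet.restrictTy (Obj := Obj) N (otype o) Minit) τ
            (OCNet.restrictTy (Obj := Obj) N (otype o) Mfinal) ∧
          traces o = τ.map N.lab) ∧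
      ¬ ∃ σ : List (Tr × (Ty → Obj)),
          OCNet.Run N otype Minit σ Mfinal ∧
          ∀ o : Obj, OCNet.flatten N σ o = traces o := by
  refine ⟨Bool, Bool, Bool, Bool, Bool, exN, id,
    {(false, false), (true, true)}, 0, fun o => [o], ?_, ?_⟩
  · intro o
    have hre : OCNet.restrictTy (Obj := Bool) exN o {(false, false), (true, true)} = {o} := by
      cases o <;> simp [OCNet.restrictTy, (show ∀ b, exN.pt b = b from fun _ => rfl), Multiset.filter_cons, Multiset.filter_singleton]
    have hre0 : OCNet.restrictTy (Obj := Bool) exN o (0 : Multiset (Bool × Bool)) = 0 := by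
      simp [OCNet.restrictTy]
    simp only [id] 
    rw [hre, hre0]
    refine ⟨[o], ?_, by simp [exN]⟩
    have hpre : OCNet.preTy exN o o = {o} := by
      cases o <;> simp [OCNet.preTy, (show ∀ b, exN.pt b = b from fun _ => rfl), (show ∀ b, exN.pre b = Finset.univ from fun _ => rfl), Finset.univ, Multiset.filter_cons,
        Multiset.filter_singleton] <;> rfl
    have hpost : OCNet.postTy exN o o = 0 := by
      simp [OCNet.postTy, exN]; rfl
    refine OCNet.FlatRun.step (by rw [hpre]; simp) (by rw [hpre]) ?_
    rw [hpre, hpost]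
    simpa using OCNet.FlatRun.nil (0 : Multiset Bool)
  · rintro ⟨σ, hrun, hfl⟩
    have h1 := hfl false
    have h2 := hfl true
    have := exN_flatten_eq hrun
    rw [h1, h2] at this
    simp at this
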